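/- Let S₀ determine a strictly weak, left invariant sub-Finsler metric on a Hilbertian H-type group M = V ⊕ W. Then for all x, y ∈ V and z₁, z₂ ∈ W one has ρ_S(x + z₁, y + z₂) = 0 if and only if x = y. -/

import Mathlib

open scoped RealInnerProductSpace

/-- A Hilbertian H-type group: a real Hilbert space `M` with an orthogonal decomposition
`M = V ⊕ W` into nontrivial closed subspaces, `W` finite dimensional, a continuous
skew-symmetric Lie bracket with `[M,M] ⊆ W`, `[M,W] = 0`, and the map `J` determined by
`⟪J z x, y⟫ = ⟪z, [x,y]⟫` satisfying `J_z ∘ J_z = -‖z‖² id` on `V`. -/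
structure HTypeGroup (M : Type*) [NormedAddCommGroup M] [InnerProductSpace ℝ M]
    [CompleteSpace M] where
  V : Submodule ℝ M
  W : Submodule ℝ M
  V_closed : IsClosed (V : Set M)
  W_closed : IsClosed (W : Set M)
  V_nontrivial : V ≠ ⊥
  W_nontrivial : W ≠ ⊥
  W_findim : FiniteDimensional ℝ ↥W
  orthogonal : ∀ v ∈ V, ∀ w ∈ W, ⟪v, w⟫ = 0
  proj1 : M →L[ℝ] M
  proj2 : M →L[ℝ] M
  proj1_mem : ∀ v : M, proj1 v ∈ V
  proj2_mem : ∀ v : M, proj2 v ∈ W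
  proj_add : ∀ v : M, proj1 v + proj2 v = v
  bracket : M →L[ℝ] M →L[ℝ] M
  bracket_skew : ∀ u v : M, bracket u v = - bracket v u
  bracket_mem_W : ∀ u v : M, bracket u v ∈ W
  bracket_W : ∀ u : M, ∀ w ∈ W, bracket u w = 0
  Jmap : M →L[ℝ] M →L[ℝ] M
  Jmap_mem_V : ∀ z ∈ W, ∀ x ∈ V, Jmap z x ∈ V
  Jmap_inner : ∀ z ∈ W, ∀ x ∈ V, ∀ y ∈ V, ⟪Jmap z x, y⟫ = ⟪z, bracket x y⟫
  Jmap_sq : ∀ z ∈ W, ∀ x ∈ V, Jmap z (Jmap z x) = -(‖z‖ ^ 2) • x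

/-- A continuous, piecewise continuously differentiable curve on `[0,1]`: a continuous
curve together with a derivative function which is the honest derivative away from a
finite exceptional set, and which is interval integrable. -/
structure PC1Curve (M : Type*) [NormedAddCommGroup M] [NormedSpace ℝ M] where
  toFun : ℝ → M
  deriv : ℝ → M
  continuousOn : ContinuousOn toFun (Set.Icc 0 1)
  exc : Set ℝ
  exc_finite : exc.Finite
  hasDeriv : ∀ t ∈ Set.Ioo (0 : ℝ) 1 \ exc, HasDerivAt toFun (deriv t) t
  deriv_integrable : IntervalIntegrable deriv MeasureTheory.volume 0 1

/-- A horizontal curve: a piecewise `C¹` curve `γ = γ₁ + γ₂` (with `γᵢ = πᵢ ∘ γ`) such that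
`γ₂'(t) = (1/2)[γ₁(t), γ₁'(t)]` wherever the derivative exists. -/
def IsHorizontal {M : Type*} [NormedAddCommGroup M] [InnerProductSpace ℝ M]
    [CompleteSpace M] (H : HTypeGroup M) (γ : PC1Curve M) : Prop :=
  ∀ t ∈ Set.Ioo (0 : ℝ) 1 \ γ.exc,
    H.proj2 (γ.deriv t) = (2⁻¹ : ℝ) • H.bracket (H.proj1 (γ.toFun t)) (H.proj1 (γ.deriv t))

/-- The sub-Finsler length `ℓ_S(γ) = ∫₀¹ S₀(γ₁'(t)) dt` of a curve, with respect to the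
left invariant sub-Finsler metric determined by the norm `S₀` on `V`. -/
noncomputable def subFinslerLength {M : Type*} [NormedAddCommGroup M] [InnerProductSpace ℝ M]
    [CompleteSpace M] (H : HTypeGroup M) (S₀ : M → ℝ) (γ : PC1Curve M) : ℝ :=
  ∫ t in (0 : ℝ)..1, S₀ (H.proj1 (γ.deriv t))

/-- The sub-Finsler distance `ρ_S(p, q)`: the infimum of the sub-Finsler lengths of
horizontal curves joining `p` to `q`. -/
noncomputable def subFinslerDist {M : Type*} [NormedAddCommGroup M] [InnerProductSpace ℝ M]
    [CompleteSpace M] (H : HTypeGroup M) (S₀ : M → ℝ) (p q : M) : ℝ :=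
  sInf {L : ℝ | ∃ γ : PC1Curve M, IsHorizontal H γ ∧ γ.toFun 0 = p ∧ γ.toFun 1 = q ∧
    L = subFinslerLength H S₀ γ}

section Aux
open Real MeasureTheory Set

variable {M : Type*} [NormedAddCommGroup M] [InnerProductSpace ℝ M] [CompleteSpace M]

lemma HTypeGroup.memVW_eq_zero (H : HTypeGroup M) {m : M} (h1 : m ∈ H.V) (h2 : m ∈ H.W) :
    m = 0 :=
  inner_self_eq_zero.mp (H.orthogonal m h1 m h2)

lemma HTypeGroup.proj2_sub (H : HTypeGroup M) (m : M) : H.proj2 m = m - H.proj1 m :=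
  eq_sub_of_add_eq' (H.proj_add m)

lemma HTypeGroup.proj1_sub (H : HTypeGroup M) (m : M) : H.proj1 m = m - H.proj2 m :=
  eq_sub_of_add_eq (H.proj_add m)

lemma HTypeGroup.proj1_of_V (H : HTypeGroup M) {m : M} (h : m ∈ H.V) : H.proj1 m = m := by
  have h2 : H.proj2 m = 0 := by
    apply H.memVW_eq_zero _ (H.proj2_mem m)
    rw [H.proj2_sub]; exact Submodule.sub_mem _ h (H.proj1_mem m)
  rw [H.proj1_sub, h2, sub_zero]

lemma HTypeGroup.proj2_of_W (H : HTypeGroup M) {m : M} (h : m ∈ H.W) : H.proj2 m = m := by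
  have h1 : H.proj1 m = 0 := by
    apply H.memVW_eq_zero (H.proj1_mem m)
    rw [H.proj1_sub]; exact Submodule.sub_mem _ h (H.proj2_mem m)
  rw [H.proj2_sub, h1, sub_zero]

lemma HTypeGroup.proj1_of_W (H : HTypeGroup M) {m : M} (h : m ∈ H.W) : H.proj1 m = 0 := by
  rw [H.proj1_sub, H.proj2_of_W h, sub_self]

lemma HTypeGroup.proj2_of_V (H : HTypeGroup M) {m : M} (h : m ∈ H.V) : H.proj2 m = 0 := by
  rw [H.proj2_sub, H.proj1_of_V h, sub_self]

lemma HTypeGroup.bracket_self (H : HTypeGroup M) (m : M) : H.bracket m m = 0 := by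
  have h := H.bracket_skew m m
  have h2 : H.bracket m m + H.bracket m m = 0 := by nth_rewrite 2 [h]; simp
  have h3 : (2 : ℝ) • H.bracket m m = 0 := by rw [two_smul]; exact h2
  exact (smul_eq_zero.mp h3).resolve_left (by norm_num)

lemma HTypeGroup.J_skew (H : HTypeGroup M) {w x y : M} (hw : w ∈ H.W) (hx : x ∈ H.V)
    (hy : y ∈ H.V) : ⟪H.Jmap w x, y⟫ = -⟪H.Jmap w y, x⟫ := by
  rw [H.Jmap_inner w hw x hx y hy, H.Jmap_inner w hw y hy x hx, H.bracket_skew y x,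
    inner_neg_right]
  ring

lemma HTypeGroup.J_anticomm (H : HTypeGroup M) {w w' v : M} (hw : w ∈ H.W) (hw' : w' ∈ H.W)
    (hv : v ∈ H.V) :
    H.Jmap w (H.Jmap w' v) + H.Jmap w' (H.Jmap w v) = (-(2 * ⟪w, w'⟫)) • v := by
  have hww' : w + w' ∈ H.W := Submodule.add_mem _ hw hw'
  have h1 := H.Jmap_sq (w + w') hww' v hv
  have h2 := H.Jmap_sq w hw v hv
  have h3 := H.Jmap_sq w' hw' v hv
  have hnorm : ‖w + w'‖ ^ 2 = ‖w‖ ^ 2 + 2 * ⟪w, w'⟫ + ‖w'‖ ^ 2 := by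
    rw [@norm_add_sq_real]
  have hexp : H.Jmap (w + w') (H.Jmap (w + w') v)
      = H.Jmap w (H.Jmap w v) + H.Jmap w (H.Jmap w' v) + H.Jmap w' (H.Jmap w v)
        + H.Jmap w' (H.Jmap w' v) := by
    simp [map_add, ContinuousLinearMap.add_apply]
    abel
  rw [hexp, h2, h3, hnorm] at h1
  linear_combination (norm := module) h1

lemma HTypeGroup.J_inner_J (H : HTypeGroup M) {w w' v : M} (hw : w ∈ H.W) (hw' : w' ∈ H.W)
    (hv : v ∈ H.V) : ⟪H.Jmap w' v, H.Jmap w v⟫ = ⟪w', w⟫ * ‖v‖ ^ 2 := by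
  have hJw'v : H.Jmap w' v ∈ H.V := H.Jmap_mem_V w' hw' v hv
  have hJwv : H.Jmap w v ∈ H.V := H.Jmap_mem_V w hw v hv
  have e1 : ⟪H.Jmap w' v, H.Jmap w v⟫ = -⟪H.Jmap w (H.Jmap w' v), v⟫ := by
    rw [real_inner_comm]
    rw [H.J_skew hw hv hJw'v]
  have e2 : H.Jmap w (H.Jmap w' v) = (-(2 * ⟪w, w'⟫)) • v - H.Jmap w' (H.Jmap w v) := by
    rw [← H.J_anticomm hw hw' hv]; abel
  have e3 : ⟪H.Jmap w' (H.Jmap w v), v⟫ = -⟪H.Jmap w' v, H.Jmap w v⟫ := by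
    rw [H.J_skew hw' hJwv hv]
  rw [e2, inner_sub_left, real_inner_smul_left, e3, real_inner_self_eq_norm_sq] at e1
  have : ⟪w', w⟫ = ⟪w, w'⟫ := real_inner_comm _ _
  rw [this]
  linarith [e1]

lemma HTypeGroup.bracket_J (H : HTypeGroup M) {w v : M} (hw : w ∈ H.W) (hv : v ∈ H.V) :
    H.bracket v (H.Jmap w v) = (‖v‖ ^ 2) • w := by
  have hJwv : H.Jmap w v ∈ H.V := H.Jmap_mem_V w hw v hv
  set D := H.bracket v (H.Jmap w v) - (‖v‖ ^ 2) • w with hD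
  have hDW : D ∈ H.W :=
    Submodule.sub_mem _ (H.bracket_mem_W v (H.Jmap w v)) (Submodule.smul_mem _ _ hw)
  have key : ∀ w' ∈ H.W, ⟪w', D⟫ = 0 := by
    intro w' hw'
    rw [hD, inner_sub_right, real_inner_smul_right]
    have h1 : ⟪w', H.bracket v (H.Jmap w v)⟫ = ⟪H.Jmap w' v, H.Jmap w v⟫ :=
      (H.Jmap_inner w' hw' v hv (H.Jmap w v) hJwv).symm
    rw [h1, H.J_inner_J hw hw' hv]
    ring
  have : D = 0 := inner_self_eq_zero.mp (key D hDW)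
  have := sub_eq_zero.mp this
  exact this

lemma HTypeGroup.J_norm (H : HTypeGroup M) {w v : M} (hw : w ∈ H.W) (hv : v ∈ H.V) :
    ‖H.Jmap w v‖ = ‖w‖ * ‖v‖ := by
  have h := H.J_inner_J hw hw hv
  rw [real_inner_self_eq_norm_sq, real_inner_self_eq_norm_sq] at h
  nlinarith [norm_nonneg (H.Jmap w v), norm_nonneg w, norm_nonneg v,
    mul_nonneg (norm_nonneg w) (norm_nonneg v)]

end Aux

section Scal
open Real

/-- Scalar components of the explicit horizontal curve. -/
noncomputable def g9 (t : ℝ) : ℝ := sin (2 * π * t)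
noncomputable def gd9 (t : ℝ) : ℝ := 2 * π * cos (2 * π * t)
noncomputable def h9 (t : ℝ) : ℝ := sin (2 * π * t) ^ 2 * cos (2 * π * t)
noncomputable def hd9 (t : ℝ) : ℝ :=
  2 * π * (2 * sin (2 * π * t) * cos (2 * π * t) ^ 2 - sin (2 * π * t) ^ 3)
noncomputable def P9 (t : ℝ) : ℝ := t * sin (2 * π * t) + (cos (2 * π * t) - 1) / π
noncomputable def Pd9 (t : ℝ) : ℝ := t * gd9 t - g9 t
noncomputable def Q9 (t : ℝ) : ℝ := t * h9 t - sin (2 * π * t) ^ 3 / (3 * π)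
noncomputable def Qd9 (t : ℝ) : ℝ := t * hd9 t - h9 t
noncomputable def R9 (t : ℝ) : ℝ := -(π / 2) * t + sin (4 * π * t) / 4 - sin (8 * π * t) / 16
noncomputable def Rd9 (t : ℝ) : ℝ := g9 t * hd9 t - h9 t * gd9 t

lemma hasDerivAt_lin9 (c t : ℝ) : HasDerivAt (fun s : ℝ => c * s) c t := by
  simpa using (hasDerivAt_id t).const_mul c

lemma hasDerivAt_sin9 (c t : ℝ) :
    HasDerivAt (fun s : ℝ => sin (c * s)) (c * cos (c * t)) t := by
  have h1 := (Real.hasDerivAt_sin (c * t)).comp t (hasDerivAt_lin9 c t)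
  rw [show c * cos (c * t) = cos (c * t) * c by ring]
  exact h1

lemma hasDerivAt_cos9 (c t : ℝ) :
    HasDerivAt (fun s : ℝ => cos (c * s)) (-(c * sin (c * t))) t := by
  have h1 := (Real.hasDerivAt_cos (c * t)).comp t (hasDerivAt_lin9 c t)
  rw [show -(c * sin (c * t)) = -sin (c * t) * c by ring]
  exact h1

lemma g9_hasDeriv (t : ℝ) : HasDerivAt g9 (gd9 t) t := by
  have := hasDerivAt_sin9 (2 * π) t
  exact this

lemma h9_hasDeriv (t : ℝ) : HasDerivAt h9 (hd9 t) t := by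
  have h1 := ((hasDerivAt_sin9 (2 * π) t).pow 2).mul (hasDerivAt_cos9 (2 * π) t)
  have : hd9 t = (↑2 * sin (2 * π * t) ^ (2 - 1) * (2 * π * cos (2 * π * t))) * cos (2 * π * t)
      + sin (2 * π * t) ^ 2 * -(2 * π * sin (2 * π * t)) := by
    simp [hd9]; ring
  rw [this]; exact h1

lemma P9_hasDeriv (t : ℝ) : HasDerivAt P9 (Pd9 t) t := by
  have h1 := ((hasDerivAt_id t).mul (hasDerivAt_sin9 (2 * π) t)).add
    (((hasDerivAt_cos9 (2 * π) t).sub_const 1).div_const π)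
  have hπ : π ≠ 0 := Real.pi_ne_zero
  have : Pd9 t = (1 * sin (2 * π * t) + t * (2 * π * cos (2 * π * t)))
      + (-(2 * π * sin (2 * π * t))) / π := by
    simp only [Pd9, gd9, g9]; field_simp; ring
  rw [this]; exact h1

lemma Q9_hasDeriv (t : ℝ) : HasDerivAt Q9 (Qd9 t) t := by
  have h1 := ((hasDerivAt_id t).mul (h9_hasDeriv t)).sub
    (((hasDerivAt_sin9 (2 * π) t).pow 3).div_const (3 * π))
  have hπ : π ≠ 0 := Real.pi_ne_zero
  have : Qd9 t = (1 * h9 t + t * hd9 t)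
      - (↑(3:ℕ) * sin (2 * π * t) ^ (3 - 1) * (2 * π * cos (2 * π * t))) / (3 * π) := by
    simp only [Qd9, hd9, h9]; push_cast; field_simp; ring
  rw [this]; exact h1

lemma R9_hasDeriv (t : ℝ) : HasDerivAt R9 (Rd9 t) t := by
  have h1 := (((hasDerivAt_lin9 (-(π / 2)) t).add
      ((hasDerivAt_sin9 (4 * π) t).div_const 4)).sub
      ((hasDerivAt_sin9 (8 * π) t).div_const 16))
  have e1 : cos (4 * π * t) = 2 * cos (2 * π * t) ^ 2 - 1 := by
    rw [show (4 : ℝ) * π * t = 2 * (2 * π * t) by ring, Real.cos_two_mul]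
  have e2 : cos (8 * π * t) = 2 * cos (4 * π * t) ^ 2 - 1 := by
    rw [show (8 : ℝ) * π * t = 2 * (4 * π * t) by ring, Real.cos_two_mul]
  have : Rd9 t = -(π / 2) + (4 * π * cos (4 * π * t)) / 4 - (8 * π * cos (8 * π * t)) / 16 := by
    have hsc := Real.sin_sq_add_cos_sq (2 * π * t)
    simp only [Rd9, g9, gd9, h9, hd9, e2, e1]
    linear_combination (-(4*π) + 6*π*cos (2*π*t)^2
      - 2*π*(sin (2*π*t)^2 + cos (2*π*t)^2 - 1)) * hsc
  rw [this]; exact h1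

lemma g9_zero : g9 0 = 0 := by simp [g9]
lemma h9_zero : h9 0 = 0 := by simp [h9]
lemma P9_zero : P9 0 = 0 := by simp [P9]
lemma Q9_zero : Q9 0 = 0 := by simp [Q9]
lemma R9_zero : R9 0 = 0 := by simp [R9]

lemma sin_four_pi9 : sin (4 * π) = 0 := by
  rw [show (4 : ℝ) * π = 2 * (2 * π) by ring, Real.sin_two_mul]
  simp [Real.sin_two_pi]
lemma sin_eight_pi9 : sin (8 * π) = 0 := by
  rw [show (8 : ℝ) * π = 2 * (4 * π) by ring, Real.sin_two_mul, sin_four_pi9]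
  ring

lemma g9_one : g9 1 = 0 := by simp [g9, Real.sin_two_pi]
lemma h9_one : h9 1 = 0 := by simp [h9, Real.sin_two_pi]
lemma P9_one : P9 1 = 0 := by simp [P9, Real.sin_two_pi, Real.cos_two_pi]
lemma Q9_one : Q9 1 = 0 := by
  have := h9_one
  simp [Q9, Real.sin_two_pi]
  simp [h9, Real.sin_two_pi]
lemma R9_one : R9 1 = -(π / 2) := by
  simp [R9, sin_four_pi9, sin_eight_pi9]

lemma gd9_bound (t : ℝ) : |gd9 t| ≤ 2 * π := by
  have h1 : |cos (2 * π * t)| ≤ 1 := Real.abs_cos_le_one _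
  have h2 : (0:ℝ) < π := Real.pi_pos
  rw [gd9, abs_mul, abs_of_pos (by positivity : (0:ℝ) < 2 * π)]
  nlinarith

lemma hd9_bound (t : ℝ) : |hd9 t| ≤ 6 * π := by
  have h1 : |cos (2 * π * t)| ≤ 1 := Real.abs_cos_le_one _
  have h2 : |sin (2 * π * t)| ≤ 1 := Real.abs_sin_le_one _
  have h3 : (0:ℝ) < π := Real.pi_pos
  rw [hd9, abs_mul, abs_of_pos (by positivity : (0:ℝ) < 2 * π)]
  have hsn := abs_nonneg (sin (2 * π * t))
  have hcn := abs_nonneg (cos (2 * π * t))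
  have hc2 : |cos (2 * π * t)| ^ 2 ≤ 1 := pow_le_one₀ hcn h1
  have hs3 : |sin (2 * π * t)| ^ 3 ≤ 1 := pow_le_one₀ hsn h2
  have h4 : |2 * sin (2 * π * t) * cos (2 * π * t) ^ 2 - sin (2 * π * t) ^ 3| ≤ 3 := by
    have h5 := abs_sub (2 * sin (2 * π * t) * cos (2 * π * t) ^ 2) (sin (2 * π * t) ^ 3)
    have e1 : |2 * sin (2 * π * t) * cos (2 * π * t) ^ 2|
        = 2 * |sin (2 * π * t)| * |cos (2 * π * t)| ^ 2 := by
      rw [abs_mul, abs_mul, abs_pow, abs_two]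
    have e2 : |sin (2 * π * t) ^ 3| = |sin (2 * π * t)| ^ 3 := abs_pow _ _
    rw [e1, e2] at h5
    nlinarith [h5, hc2, hs3, h2, hsn]
  nlinarith [h4, abs_nonneg (2 * sin (2 * π * t) * cos (2 * π * t) ^ 2 - sin (2 * π * t) ^ 3)]

lemma gd9_cont : Continuous gd9 := by unfold gd9; fun_prop
lemma hd9_cont : Continuous hd9 := by unfold hd9; fun_prop
lemma g9_cont : Continuous g9 := by unfold g9; fun_prop
lemma h9_cont : Continuous h9 := by unfold h9; fun_prop
lemma Pd9_cont : Continuous Pd9 := by unfold Pd9; exact (continuous_id.mul gd9_cont).sub g9_cont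
lemma Qd9_cont : Continuous Qd9 := by unfold Qd9; exact (continuous_id.mul hd9_cont).sub h9_cont
lemma Rd9_cont : Continuous Rd9 := by unfold Rd9; exact (g9_cont.mul hd9_cont).sub (h9_cont.mul gd9_cont)

end Scal

section Curve
open Real MeasureTheory Set

variable {M : Type*} [NormedAddCommGroup M] [InnerProductSpace ℝ M] [CompleteSpace M]

lemma S9_nonneg (H : HTypeGroup M) (S₀ : M → ℝ)
    (hS_add : ∀ u ∈ H.V, ∀ v ∈ H.V, S₀ (u + v) ≤ S₀ u + S₀ v)
    (hS_smul : ∀ (c : ℝ), ∀ v ∈ H.V, S₀ (c • v) = |c| * S₀ v) :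
    ∀ m ∈ H.V, 0 ≤ S₀ m := by
  have h0 : S₀ (0 : M) = 0 := by
    have := hS_smul 0 0 (Submodule.zero_mem _)
    simpa using this
  intro m hm
  have h1 : S₀ ((-1 : ℝ) • m) = S₀ m := by rw [hS_smul (-1) m hm]; simp
  have h2 : S₀ (m + (-1 : ℝ) • m) ≤ S₀ m + S₀ ((-1 : ℝ) • m) :=
    hS_add m hm _ (Submodule.smul_mem _ _ hm)
  have h3 : m + (-1 : ℝ) • m = 0 := by module
  rw [h3, h0, h1] at h2
  linarith

lemma S9_cont (H : HTypeGroup M) (S₀ : M → ℝ)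
    (hS_add : ∀ u ∈ H.V, ∀ v ∈ H.V, S₀ (u + v) ≤ S₀ u + S₀ v)
    (hS_smul : ∀ (c : ℝ), ∀ v ∈ H.V, S₀ (c • v) = |c| * S₀ v)
    (c₀ : ℝ) (hc₀ : 0 < c₀) (hS_cont : ∀ v ∈ H.V, S₀ v ≤ c₀ * ‖v‖) :
    Continuous fun m : M => S₀ (H.proj1 m) := by
  have hCnn : 0 ≤ c₀ * ‖H.proj1‖ := mul_nonneg hc₀.le (norm_nonneg _)
  have key : ∀ a b : M, S₀ (H.proj1 a) - S₀ (H.proj1 b) ≤ c₀ * ‖H.proj1‖ * ‖a - b‖ := by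
    intro a b
    have hsub : H.proj1 a - H.proj1 b ∈ H.V :=
      Submodule.sub_mem _ (H.proj1_mem a) (H.proj1_mem b)
    have h1 : S₀ (H.proj1 a) ≤ S₀ (H.proj1 b) + S₀ (H.proj1 a - H.proj1 b) := by
      have := hS_add (H.proj1 b) (H.proj1_mem b) (H.proj1 a - H.proj1 b) hsub
      simpa using this
    have h2 : S₀ (H.proj1 a - H.proj1 b) ≤ c₀ * ‖H.proj1 a - H.proj1 b‖ :=
      hS_cont _ hsub
    have h3 : ‖H.proj1 a - H.proj1 b‖ ≤ ‖H.proj1‖ * ‖a - b‖ := by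
      rw [← map_sub]
      exact H.proj1.le_opNorm _
    have h4 : c₀ * ‖H.proj1 a - H.proj1 b‖ ≤ c₀ * (‖H.proj1‖ * ‖a - b‖) :=
      mul_le_mul_of_nonneg_left h3 hc₀.le
    have h5 : c₀ * (‖H.proj1‖ * ‖a - b‖) = c₀ * ‖H.proj1‖ * ‖a - b‖ := by ring
    linarith
  have : LipschitzWith (Real.toNNReal (c₀ * ‖H.proj1‖)) fun m : M => S₀ (H.proj1 m) := by
    apply LipschitzWith.of_dist_le_mul
    intro a b
    rw [Real.dist_eq, dist_eq_norm]
    have hc : (Real.toNNReal (c₀ * ‖H.proj1‖) : ℝ) = c₀ * ‖H.proj1‖ :=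
      Real.coe_toNNReal _ hCnn
    rw [hc]
    rcases abs_cases (S₀ (H.proj1 a) - S₀ (H.proj1 b)) with ⟨he, _⟩ | ⟨he, _⟩ <;> rw [he]
    · exact key a b
    · have := key b a
      rw [show ‖a - b‖ = ‖b - a‖ from norm_sub_rev a b]
      linarith
  exact this.continuous

lemma exists_good_curve (H : HTypeGroup M) (S₀ : M → ℝ)
    (hS_add : ∀ u ∈ H.V, ∀ v ∈ H.V, S₀ (u + v) ≤ S₀ u + S₀ v)
    (hS_smul : ∀ (c : ℝ), ∀ v ∈ H.V, S₀ (c • v) = |c| * S₀ v)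
    (c₀ : ℝ) (hc₀ : 0 < c₀) (hS_cont : ∀ v ∈ H.V, S₀ v ≤ c₀ * ‖v‖)
    {x y z₁ z₂ v : M} (hx : x ∈ H.V) (hy : y ∈ H.V) (hz₁ : z₁ ∈ H.W) (hz₂ : z₂ ∈ H.W)
    (hv : v ∈ H.V) (hv0 : v ≠ 0) :
    ∃ γ : PC1Curve M, IsHorizontal H γ ∧ γ.toFun 0 = x + z₁ ∧ γ.toFun 1 = y + z₂ ∧
      subFinslerLength H S₀ γ ≤ S₀ (y - x) + 2 * π * S₀ v +
        6 * π * S₀ ((-(4 : ℝ) / (π * ‖v‖ ^ 2)) •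
          H.Jmap (z₂ - z₁ - (2⁻¹ : ℝ) • H.bracket x y) v) := by
  have hπ : (0:ℝ) < π := Real.pi_pos
  have hnv : ‖v‖ ≠ 0 := norm_ne_zero_iff.mpr hv0
  set w : M := z₂ - z₁ - (2⁻¹ : ℝ) • H.bracket x y with hw_def
  set u : M := (-(4 : ℝ) / (π * ‖v‖ ^ 2)) • H.Jmap w v with hu_def
  set e : M := y - x with he_def
  have hwW : w ∈ H.W := Submodule.sub_mem _ (Submodule.sub_mem _ hz₂ hz₁)
    (Submodule.smul_mem _ _ (H.bracket_mem_W x y))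
  have huV : u ∈ H.V := Submodule.smul_mem _ _ (H.Jmap_mem_V w hwW v hv)
  have heV : e ∈ H.V := Submodule.sub_mem _ hy hx
  set A1 : M := H.bracket x e with hA1_def
  set A2 : M := H.bracket x v with hA2_def
  set A3 : M := H.bracket x u with hA3_def
  set A4 : M := H.bracket e v with hA4_def
  set A5 : M := H.bracket e u with hA5_def
  set A6 : M := H.bracket v u with hA6_def
  have hA1W : A1 ∈ H.W := H.bracket_mem_W _ _
  have hA2W : A2 ∈ H.W := H.bracket_mem_W _ _
  have hA3W : A3 ∈ H.W := H.bracket_mem_W _ _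
  have hA4W : A4 ∈ H.W := H.bracket_mem_W _ _
  have hA5W : A5 ∈ H.W := H.bracket_mem_W _ _
  have hA6W : A6 ∈ H.W := H.bracket_mem_W _ _
  set F : ℝ → M := fun t => x + z₁ + t • e + g9 t • v + h9 t • u + (2⁻¹ * t) • A1
    + (2⁻¹ * g9 t) • A2 + (2⁻¹ * h9 t) • A3 + (2⁻¹ * P9 t) • A4 + (2⁻¹ * Q9 t) • A5
    + (2⁻¹ * R9 t) • A6 with hF_def
  set Fd : ℝ → M := fun t => e + gd9 t • v + hd9 t • u + (2⁻¹ : ℝ) • A1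
    + (2⁻¹ * gd9 t) • A2 + (2⁻¹ * hd9 t) • A3 + (2⁻¹ * Pd9 t) • A4 + (2⁻¹ * Qd9 t) • A5
    + (2⁻¹ * Rd9 t) • A6 with hFd_def
  have hderiv : ∀ t : ℝ, HasDerivAt F (Fd t) t := by
    intro t
    have big := ((((((((((hasDerivAt_const t (x + z₁)).add
      ((hasDerivAt_id t).smul_const e)).add
      ((g9_hasDeriv t).smul_const v)).add
      ((h9_hasDeriv t).smul_const u)).add
      (((hasDerivAt_id t).const_mul (2⁻¹:ℝ)).smul_const A1)).add
      (((g9_hasDeriv t).const_mul (2⁻¹:ℝ)).smul_const A2)).add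
      (((h9_hasDeriv t).const_mul (2⁻¹:ℝ)).smul_const A3)).add
      (((P9_hasDeriv t).const_mul (2⁻¹:ℝ)).smul_const A4)).add
      (((Q9_hasDeriv t).const_mul (2⁻¹:ℝ)).smul_const A5)).add
      (((R9_hasDeriv t).const_mul (2⁻¹:ℝ)).smul_const A6))
    convert big using 1
    · rfl
    module
  have hFcont : Continuous F := continuous_iff_continuousAt.mpr fun t => (hderiv t).continuousAt
  have hFdcont : Continuous Fd := by
    rw [hFd_def]
    have c1 : Continuous fun t : ℝ => gd9 t • v := gd9_cont.smul continuous_const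
    have c2 : Continuous fun t : ℝ => hd9 t • u := hd9_cont.smul continuous_const
    have c3 : Continuous fun t : ℝ => (2⁻¹ * gd9 t) • A2 :=
      (continuous_const.mul gd9_cont).smul continuous_const
    have c4 : Continuous fun t : ℝ => (2⁻¹ * hd9 t) • A3 :=
      (continuous_const.mul hd9_cont).smul continuous_const
    have c5 : Continuous fun t : ℝ => (2⁻¹ * Pd9 t) • A4 :=
      (continuous_const.mul Pd9_cont).smul continuous_const
    have c6 : Continuous fun t : ℝ => (2⁻¹ * Qd9 t) • A5 :=
      (continuous_const.mul Qd9_cont).smul continuous_const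
    have c7 : Continuous fun t : ℝ => (2⁻¹ * Rd9 t) • A6 :=
      (continuous_const.mul Rd9_cont).smul continuous_const
    exact ((((((((continuous_const.add c1).add c2).add
      continuous_const).add c3).add c4).add c5).add c6).add c7)
  set γ : PC1Curve M := ⟨F, Fd, hFcont.continuousOn, ∅, finite_empty,
    fun t _ => hderiv t, hFdcont.intervalIntegrable 0 1⟩ with hγ_def
  have hproj1F : ∀ t, H.proj1 (F t) = x + t • e + g9 t • v + h9 t • u := by
    intro t
    rw [hF_def]
    simp only [map_add, _root_.map_smul, H.proj1_of_V hx, H.proj1_of_V heV, H.proj1_of_V hv,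
      H.proj1_of_V huV, H.proj1_of_W hz₁, H.proj1_of_W hA1W, H.proj1_of_W hA2W,
      H.proj1_of_W hA3W, H.proj1_of_W hA4W, H.proj1_of_W hA5W, H.proj1_of_W hA6W,
      smul_zero, add_zero]
  have hproj1Fd : ∀ t, H.proj1 (Fd t) = e + gd9 t • v + hd9 t • u := by
    intro t
    rw [hFd_def]
    simp only [map_add, _root_.map_smul, H.proj1_of_V heV, H.proj1_of_V hv,
      H.proj1_of_V huV, H.proj1_of_W hA1W, H.proj1_of_W hA2W,
      H.proj1_of_W hA3W, H.proj1_of_W hA4W, H.proj1_of_W hA5W, H.proj1_of_W hA6W,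
      smul_zero, add_zero]
  have hproj2Fd : ∀ t, H.proj2 (Fd t) = (2⁻¹ : ℝ) • A1 + (2⁻¹ * gd9 t) • A2
      + (2⁻¹ * hd9 t) • A3 + (2⁻¹ * Pd9 t) • A4 + (2⁻¹ * Qd9 t) • A5
      + (2⁻¹ * Rd9 t) • A6 := by
    intro t
    rw [hFd_def]
    simp only [map_add, _root_.map_smul, H.proj2_of_V heV, H.proj2_of_V hv,
      H.proj2_of_V huV, H.proj2_of_W hA1W, H.proj2_of_W hA2W,
      H.proj2_of_W hA3W, H.proj2_of_W hA4W, H.proj2_of_W hA5W, H.proj2_of_W hA6W,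
      smul_zero, zero_add]
  have hhor : IsHorizontal H γ := by
    intro t _
    show H.proj2 (Fd t) = (2⁻¹ : ℝ) • H.bracket (H.proj1 (F t)) (H.proj1 (Fd t))
    rw [hproj2Fd, hproj1F, hproj1Fd]
    have hbve : H.bracket v e = -A4 := by rw [hA4_def, H.bracket_skew v e]
    have hbue : H.bracket u e = -A5 := by rw [hA5_def, H.bracket_skew u e]
    have hbuv : H.bracket u v = -A6 := by rw [hA6_def, H.bracket_skew u v]
    simp only [map_add, _root_.map_smul, ContinuousLinearMap.add_apply,
      ContinuousLinearMap.smul_apply, H.bracket_self, hbve, hbue, hbuv,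
      ← hA1_def, ← hA2_def, ← hA3_def, ← hA4_def, ← hA5_def, ← hA6_def,
      Pd9, Qd9, Rd9]
    module
  have hstart : γ.toFun 0 = x + z₁ := by
    show F 0 = x + z₁
    rw [hF_def]
    simp [g9_zero, h9_zero, P9_zero, Q9_zero, R9_zero]
  have hA1y : A1 = H.bracket x y := by
    rw [hA1_def, he_def, map_sub, H.bracket_self, sub_zero]
  have hA6w : A6 = (-(4 : ℝ) / π) • w := by
    rw [hA6_def, hu_def, _root_.map_smul, H.bracket_J hwW hv, smul_smul]
    congr 1
    field_simp
  have hend : γ.toFun 1 = y + z₂ := by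
    show F 1 = y + z₂
    rw [hF_def]
    simp only [g9_one, h9_one, P9_one, Q9_one, R9_one]
    rw [hA1y, hA6w]
    have hscal : (2⁻¹ * -(π / 2)) • ((-(4 : ℝ) / π) • w) = w := by
      rw [smul_smul, show (2⁻¹ * -(π / 2)) * (-(4 : ℝ) / π) = 1 by field_simp; ring, one_smul]
    rw [hscal, hw_def, he_def]
    simp only [smul_zero, mul_zero, zero_smul, add_zero, mul_one]
    module
  have hSnn := S9_nonneg H S₀ hS_add hS_smul
  set K : ℝ := S₀ e + 2 * π * S₀ v + 6 * π * S₀ u with hK_def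
  have hlen : subFinslerLength H S₀ γ ≤ K := by
    have hpt : ∀ t ∈ Icc (0:ℝ) 1, S₀ (H.proj1 (γ.deriv t)) ≤ K := by
      intro t _
      show S₀ (H.proj1 (Fd t)) ≤ K
      rw [hproj1Fd]
      have m1 : e + gd9 t • v ∈ H.V := Submodule.add_mem _ heV (Submodule.smul_mem _ _ hv)
      have s1 : S₀ (e + gd9 t • v + hd9 t • u) ≤ S₀ (e + gd9 t • v) + S₀ (hd9 t • u) :=
        hS_add _ m1 _ (Submodule.smul_mem _ _ huV)
      have s2 : S₀ (e + gd9 t • v) ≤ S₀ e + S₀ (gd9 t • v) :=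
        hS_add _ heV _ (Submodule.smul_mem _ _ hv)
      have s3 : S₀ (gd9 t • v) ≤ 2 * π * S₀ v := by
        rw [hS_smul _ _ hv]
        exact mul_le_mul_of_nonneg_right (gd9_bound t) (hSnn v hv)
      have s4 : S₀ (hd9 t • u) ≤ 6 * π * S₀ u := by
        rw [hS_smul _ _ huV]
        exact mul_le_mul_of_nonneg_right (hd9_bound t) (hSnn u huV)
      rw [hK_def]
      linarith
    have hint : IntervalIntegrable (fun t => S₀ (H.proj1 (γ.deriv t))) volume 0 1 := by
      have : Continuous fun t => S₀ (H.proj1 (Fd t)) :=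
        (S9_cont H S₀ hS_add hS_smul c₀ hc₀ hS_cont).comp hFdcont
      exact this.intervalIntegrable 0 1
    have := intervalIntegral.integral_mono_on zero_le_one hint
      (intervalIntegrable_const (c := K)) hpt
    rw [intervalIntegral.integral_const] at this
    simpa [subFinslerLength] using this
  exact ⟨γ, hhor, hstart, hend, hlen⟩

end Curve

open Real MeasureTheory Set

/-- For a strictly weak, left invariant sub-Finsler metric `S₀` on a
Hilbertian H-type group `M = V ⊕ W`, for all `x, y ∈ V` and `z₁, z₂ ∈ W` one has
`ρ_S(x + z₁, y + z₂) = 0` if and only if `x = y`. -/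
theorem statement_9 {M : Type*} [NormedAddCommGroup M] [InnerProductSpace ℝ M]
    [CompleteSpace M] (H : HTypeGroup M) (S₀ : M → ℝ)
    (hS_add : ∀ u ∈ H.V, ∀ v ∈ H.V, S₀ (u + v) ≤ S₀ u + S₀ v)
    (hS_smul : ∀ (c : ℝ), ∀ v ∈ H.V, S₀ (c • v) = |c| * S₀ v)
    (hS_def : ∀ v ∈ H.V, S₀ v = 0 → v = 0)
    (c₀ : ℝ) (hc₀ : 0 < c₀) (hS_cont : ∀ v ∈ H.V, S₀ v ≤ c₀ * ‖v‖)
    (h_strictly_weak : ¬ ∃ c > (0 : ℝ), ∀ v ∈ H.V, c * ‖v‖ ≤ S₀ v) :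
    ∀ x ∈ H.V, ∀ y ∈ H.V, ∀ z₁ ∈ H.W, ∀ z₂ ∈ H.W,
      (subFinslerDist H S₀ (x + z₁) (y + z₂) = 0 ↔ x = y) := by
  intro x hx y hy z₁ hz₁ z₂ hz₂
  have hπ : (0:ℝ) < π := Real.pi_pos
  have hSnn := S9_nonneg H S₀ hS_add hS_smul
  have hS0 : S₀ (0 : M) = 0 := by simpa using hS_smul 0 0 (Submodule.zero_mem _)
  obtain ⟨v₀, hv₀V, hv₀⟩ := Submodule.exists_mem_ne_zero_of_ne_bot H.V_nontrivial
  set D := {L : ℝ | ∃ γ : PC1Curve M, IsHorizontal H γ ∧ γ.toFun 0 = x + z₁ ∧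
    γ.toFun 1 = y + z₂ ∧ L = subFinslerLength H S₀ γ} with hD_def
  have hdist : subFinslerDist H S₀ (x + z₁) (y + z₂) = sInf D := rfl
  have hDne : D.Nonempty := by
    obtain ⟨γ, h1, h2, h3, _⟩ := exists_good_curve H S₀ hS_add hS_smul c₀ hc₀ hS_cont
      hx hy hz₁ hz₂ hv₀V hv₀
    exact ⟨subFinslerLength H S₀ γ, γ, h1, h2, h3, rfl⟩
  have hDnn : ∀ L ∈ D, 0 ≤ L := by
    rintro L ⟨γ, -, -, -, rfl⟩
    apply intervalIntegral.integral_nonneg zero_le_one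
    intro t _
    exact hSnn _ (H.proj1_mem _)
  have hbdd : BddBelow D := ⟨0, fun L hL => hDnn L hL⟩
  have hlow : ∀ L ∈ D, S₀ (y - x) ≤ L := by
    rintro L ⟨γ, hγ, h0, h1, rfl⟩
    have hftc : ∫ t in (0:ℝ)..1, γ.deriv t = γ.toFun 1 - γ.toFun 0 :=
      MeasureTheory.integral_eq_of_hasDerivAt_off_countable_of_le γ.toFun γ.deriv
        zero_le_one γ.exc_finite.countable γ.continuousOn γ.hasDeriv γ.deriv_integrable
    set μ : Measure ℝ := volume.restrict (Ioc (0:ℝ) 1) with hμ_def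
    haveI : IsProbabilityMeasure μ := by
      constructor
      rw [hμ_def, Measure.restrict_apply_univ, Real.volume_Ioc]
      norm_num
    have hintg : Integrable γ.deriv μ := by
      have h := γ.deriv_integrable
      rw [intervalIntegrable_iff_integrableOn_Ioc_of_le zero_le_one] at h
      exact h
    set S : M → ℝ := fun m => S₀ (H.proj1 m) with hS_def2
    have hScont : Continuous S := S9_cont H S₀ hS_add hS_smul c₀ hc₀ hS_cont
    have hconv : ConvexOn ℝ Set.univ S := by
      refine ⟨convex_univ, ?_⟩
      intro a _ b _ p q hp hq _
      have e1 : S (p • a + q • b) = S₀ (p • H.proj1 a + q • H.proj1 b) := by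
        rw [hS_def2]; simp only [map_add, _root_.map_smul]
      have e2 : S₀ (p • H.proj1 a + q • H.proj1 b) ≤ S₀ (p • H.proj1 a) + S₀ (q • H.proj1 b) :=
        hS_add _ (Submodule.smul_mem _ _ (H.proj1_mem a)) _
          (Submodule.smul_mem _ _ (H.proj1_mem b))
      have e3 : S₀ (p • H.proj1 a) = p * S₀ (H.proj1 a) := by
        rw [hS_smul _ _ (H.proj1_mem a), abs_of_nonneg hp]
      have e4 : S₀ (q • H.proj1 b) = q * S₀ (H.proj1 b) := by
        rw [hS_smul _ _ (H.proj1_mem b), abs_of_nonneg hq]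
      calc S (p • a + q • b) = S₀ (p • H.proj1 a + q • H.proj1 b) := e1
        _ ≤ S₀ (p • H.proj1 a) + S₀ (q • H.proj1 b) := e2
        _ = p * S (a) + q * S (b) := by rw [e3, e4, hS_def2]
    have hSint : Integrable (fun t => S (γ.deriv t)) μ := by
      apply Integrable.mono' (hintg.norm.const_mul (c₀ * ‖H.proj1‖))
      · exact hScont.comp_aestronglyMeasurable hintg.aestronglyMeasurable
      · refine ae_of_all _ fun t => ?_
        rw [Real.norm_eq_abs, abs_of_nonneg (hSnn _ (H.proj1_mem _))]
        calc S₀ (H.proj1 (γ.deriv t)) ≤ c₀ * ‖H.proj1 (γ.deriv t)‖ :=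
              hS_cont _ (H.proj1_mem _)
          _ ≤ c₀ * (‖H.proj1‖ * ‖γ.deriv t‖) :=
              mul_le_mul_of_nonneg_left (H.proj1.le_opNorm _) hc₀.le
          _ = c₀ * ‖H.proj1‖ * ‖γ.deriv t‖ := by ring
    have hjensen : S (∫ t, γ.deriv t ∂μ) ≤ ∫ t, S (γ.deriv t) ∂μ :=
      hconv.map_integral_le hScont.continuousOn isClosed_univ
        (ae_of_all _ fun _ => Set.mem_univ _) hintg hSint
    have hieq : ∫ t, γ.deriv t ∂μ = (y + z₂) - (x + z₁) := by
      rw [← h1, ← h0, ← hftc, intervalIntegral.integral_of_le zero_le_one]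
    have hSval : S ((y + z₂) - (x + z₁)) = S₀ (y - x) := by
      rw [hS_def2]
      have e : H.proj1 ((y + z₂) - (x + z₁)) = y - x := by
        rw [map_sub, map_add, map_add, H.proj1_of_V hy, H.proj1_of_V hx,
          H.proj1_of_W hz₁, H.proj1_of_W hz₂]
        abel
      simp only
      rw [e]
    have hleneq : subFinslerLength H S₀ γ = ∫ t, S (γ.deriv t) ∂μ := by
      rw [subFinslerLength, intervalIntegral.integral_of_le zero_le_one]
    rw [hleneq, ← hSval, ← hieq]
    exact hjensen
  rw [hdist]
  constructor
  · intro h0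
    have h1 : S₀ (y - x) ≤ 0 := h0 ▸ le_csInf hDne hlow
    have h2 : 0 ≤ S₀ (y - x) := hSnn _ (Submodule.sub_mem _ hy hx)
    have h3 : y - x = 0 := hS_def _ (Submodule.sub_mem _ hy hx) (le_antisymm h1 h2)
    have := sub_eq_zero.mp h3
    exact this.symm
  · intro hxy
    subst hxy
    have hkey : ∀ ε > (0:ℝ), sInf D < ε := by
      intro ε hε
      set w : M := z₂ - z₁ - (2⁻¹:ℝ) • H.bracket x x with hw_def
      have hwW : w ∈ H.W := Submodule.sub_mem _ (Submodule.sub_mem _ hz₂ hz₁)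
        (Submodule.smul_mem _ _ (H.bracket_mem_W x x))
      set Rr : ℝ := 48 * c₀ * ‖w‖ / ε + 1 with hRr_def
      have hRrpos : 0 < Rr := by positivity
      push_neg at h_strictly_weak
      obtain ⟨v', hv'V, hv'lt⟩ := h_strictly_weak (ε / (8 * π * Rr)) (by positivity)
      have hv'0 : v' ≠ 0 := by
        intro hh
        rw [hh] at hv'lt
        rw [hS0] at hv'lt
        simp at hv'lt
      have hnv' : (0:ℝ) < ‖v'‖ := norm_pos_iff.mpr hv'0
      set v : M := (Rr / ‖v'‖) • v' with hv_def
      have hvV : v ∈ H.V := Submodule.smul_mem _ _ hv'V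
      have hv0 : v ≠ 0 := smul_ne_zero (by positivity) hv'0
      have hnv : ‖v‖ = Rr := by
        rw [hv_def, norm_smul, Real.norm_eq_abs, abs_of_pos (by positivity)]
        field_simp
      have hSv : S₀ v < ε / (8 * π) := by
        rw [hv_def, hS_smul _ _ hv'V, abs_of_pos (by positivity)]
        have h1 : Rr / ‖v'‖ * S₀ v' < Rr / ‖v'‖ * (ε / (8 * π * Rr) * ‖v'‖) := by
          apply mul_lt_mul_of_pos_left hv'lt (by positivity)
        have h2 : Rr / ‖v'‖ * (ε / (8 * π * Rr) * ‖v'‖) = ε / (8 * π) := by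
          field_simp
        linarith
      obtain ⟨γ, h1, h2, h3, h4⟩ := exists_good_curve H S₀ hS_add hS_smul c₀ hc₀ hS_cont
        hx hx hz₁ hz₂ hvV hv0
      rw [← hw_def] at h4
      have hJmem : H.Jmap w v ∈ H.V := H.Jmap_mem_V w hwW v hvV
      have hJn : ‖H.Jmap w v‖ = ‖w‖ * ‖v‖ := H.J_norm hwW hvV
      have hSJ : S₀ (H.Jmap w v) ≤ c₀ * (‖w‖ * Rr) := by
        have := hS_cont _ hJmem
        rw [hJn, hnv] at this
        exact this
      have hSu : S₀ ((-(4 : ℝ) / (π * ‖v‖ ^ 2)) • H.Jmap w v)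
          ≤ 4 / (π * Rr ^ 2) * (c₀ * (‖w‖ * Rr)) := by
        rw [hS_smul _ _ hJmem, hnv]
        have habs : |(-(4 : ℝ) / (π * Rr ^ 2))| = 4 / (π * Rr ^ 2) := by
          rw [abs_div, abs_of_pos (by positivity : (0:ℝ) < π * Rr ^ 2)]
          norm_num
        rw [habs]
        exact mul_le_mul_of_nonneg_left hSJ (by positivity)
      have hxx : S₀ (x - x) = 0 := by rw [sub_self, hS0]
      have hb1 : 2 * π * S₀ v < ε / 4 := by
        have := mul_lt_mul_of_pos_left hSv (by positivity : (0:ℝ) < 2 * π)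
        have he : 2 * π * (ε / (8 * π)) = ε / 4 := by field_simp; ring
        linarith
      have hb2 : 6 * π * (4 / (π * Rr ^ 2) * (c₀ * (‖w‖ * Rr))) < ε / 2 := by
        have he : 6 * π * (4 / (π * Rr ^ 2) * (c₀ * (‖w‖ * Rr))) = 24 * c₀ * ‖w‖ / Rr := by
          field_simp
          ring
        rw [he]
        rw [div_lt_iff₀ hRrpos]
        have hRe : Rr * ε = 48 * c₀ * ‖w‖ + ε := by
          rw [hRr_def]
          field_simp
        have hhalf : ε / 2 * Rr = 24 * c₀ * ‖w‖ + ε / 2 := by linear_combination hRe / 2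
        linarith
      have hSunn : 0 ≤ S₀ ((-(4 : ℝ) / (π * ‖v‖ ^ 2)) • H.Jmap w v) :=
        hSnn _ (Submodule.smul_mem _ _ hJmem)
      have hfin : subFinslerLength H S₀ γ < ε := by
        have hb3 : 6 * π * S₀ ((-(4 : ℝ) / (π * ‖v‖ ^ 2)) • H.Jmap w v)
            ≤ 6 * π * (4 / (π * Rr ^ 2) * (c₀ * (‖w‖ * Rr))) :=
          mul_le_mul_of_nonneg_left hSu (by positivity)
        rw [hxx] at h4
        linarith
      exact lt_of_le_of_lt (csInf_le hbdd ⟨γ, h1, h2, h3, rfl⟩) hfin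
    have h0 : 0 ≤ sInf D := le_csInf hDne hDnn
    by_contra hne
    have hpos : 0 < sInf D := lt_of_le_of_ne h0 (Ne.symm hne)
    exact absurd (hkey (sInf D) hpos) (lt_irrefl _)
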